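/- Let ν > −1. The inequalities (1−p)·ℐ_{ν+1}(x) + p·ℐ_{ν+1}(x)/ℐ_ν(x) > 1 > (1−q)·ℐ_{ν+1}(x) + q·ℐ_{ν+1}(x)/ℐ_ν(x) hold for all x in (0, ∞) if and only if p ≤ (ν+1)/(ν+2) and q ≥ 1. -/

import Mathlib

open Finset

noncomputable def besselIn (ν x : ℝ) : ℝ :=
  ∑' n : ℕ, ((1 / 4 : ℝ) ^ n * x ^ (2 * n)) * Real.Gamma (ν + 1) /
    (Real.Gamma (ν + n + 1) * n.factorial)

namespace BesselAux

/-- partial Pochhammer product -/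
noncomputable def P (μ : ℝ) (n : ℕ) : ℝ := ∏ k ∈ Finset.range n, (μ + k)

noncomputable def coef (μ : ℝ) (n : ℕ) : ℝ := (1/4)^n / (P μ n * n.factorial)

lemma P_zero (μ : ℝ) : P μ 0 = 1 := by simp [P]

lemma P_succ (μ : ℝ) (n : ℕ) : P μ (n+1) = P μ n * (μ + n) := by
  simp [P, Finset.prod_range_succ]

lemma P_succ' (μ : ℝ) (n : ℕ) : P μ (n+1) = μ * P (μ+1) n := by
  rw [P, Finset.prod_range_succ']
  simp only [Nat.cast_zero, add_zero, Nat.cast_add, Nat.cast_one]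
  rw [mul_comm, P]
  congr 1
  exact Finset.prod_congr rfl fun k _ => by push_cast; ring

lemma P_pos {μ : ℝ} (hμ : 0 < μ) (n : ℕ) : 0 < P μ n :=
  Finset.prod_pos fun k _ => by positivity

lemma P_le {μ : ℝ} (hμ : 0 < μ) (n : ℕ) : P μ n ≤ P (μ+1) n := by
  apply Finset.prod_le_prod (fun k _ => by positivity) (fun k _ => by linarith)

lemma min_le_P {μ : ℝ} (hμ : 0 < μ) (n : ℕ) : min 1 μ ≤ P μ n := by
  cases n with
  | zero => simp [P_zero]
  | succ m =>
    rw [P_succ']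
    have h1 : (1:ℝ) ≤ P (μ+1) m := by
      unfold P
      calc (1:ℝ) = ∏ _k ∈ Finset.range m, (1:ℝ) := (Finset.prod_const_one).symm
      _ ≤ ∏ k ∈ Finset.range m, (μ+1+(k:ℝ)) := by
          apply Finset.prod_le_prod (fun _ _ => zero_le_one)
          intro k _
          have : (0:ℝ) ≤ k := Nat.cast_nonneg k
          linarith
    calc min 1 μ ≤ μ := min_le_right _ _
    _ = μ * 1 := by ring
    _ ≤ μ * P (μ+1) m := by nlinarith

lemma coef_pos {μ : ℝ} (hμ : 0 < μ) (n : ℕ) : 0 < coef μ n := by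
  have := P_pos hμ n
  have : (0:ℝ) < n.factorial := by positivity
  unfold coef
  positivity

lemma coef_zero (μ : ℝ) : coef μ 0 = 1 := by simp [coef, P_zero]

lemma coef_one (μ : ℝ) : coef μ 1 = 1/(4*μ) := by
  simp [coef, P_succ, P_zero]
  ring

lemma coef_anti {μ : ℝ} (hμ : 0 < μ) (n : ℕ) : coef (μ+1) n ≤ coef μ n := by
  unfold coef
  have h1 := P_pos hμ n
  have h2 : (0:ℝ) < n.factorial := by positivity
  apply div_le_div_of_nonneg_left (by positivity) (by positivity)
  have := P_le hμ n
  nlinarith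

lemma gamma_prod {ν : ℝ} (hν : -1 < ν) (n : ℕ) :
    Real.Gamma (ν + n + 1) = Real.Gamma (ν + 1) * P (ν+1) n := by
  induction n with
  | zero => simp [P_zero]
  | succ m ih =>
    have hpos : (0:ℝ) < ν + m + 1 := by
      have : (0:ℝ) ≤ m := Nat.cast_nonneg m
      linarith
    have : (ν + (m+1 : ℕ) + 1 : ℝ) = (ν + m + 1) + 1 := by push_cast; ring
    rw [this, Real.Gamma_add_one (ne_of_gt hpos), ih, P_succ]
    ring

lemma besselIn_eq {ν : ℝ} (hν : -1 < ν) (x : ℝ) :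
    besselIn ν x = ∑' n, coef (ν+1) n * x^(2*n) := by
  unfold besselIn
  apply tsum_congr
  intro n
  rw [gamma_prod hν n]
  have hΓ : Real.Gamma (ν + 1) ≠ 0 := ne_of_gt (Real.Gamma_pos_of_pos (by linarith))
  have hP : P (ν+1) n ≠ 0 := ne_of_gt (P_pos (by linarith) n)
  have hf : ((n.factorial : ℝ)) ≠ 0 := by positivity
  have hP' : (0:ℝ) < P (ν+1) n := P_pos (by linarith) n
  have hΓ' : (0:ℝ) < Real.Gamma (ν + 1) := Real.Gamma_pos_of_pos (by linarith)
  have hf' : (0:ℝ) < (n.factorial : ℝ) := by positivity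
  rw [coef, div_mul_eq_mul_div, div_eq_div_iff (by positivity) (by positivity)]
  ring

lemma coef_mul_eq {μ : ℝ} (n : ℕ) (x : ℝ) :
    coef μ n * x^(2*n) = (x^2/4)^n / n.factorial * (P μ n)⁻¹ := by
  rw [coef, pow_mul, div_eq_mul_one_div (x^2) 4, mul_pow, div_eq_mul_inv,
    div_eq_mul_inv, mul_inv]
  ring

lemma summable_coef {μ : ℝ} (hμ : 0 < μ) (x : ℝ) :
    Summable (fun n => coef μ n * x^(2*n)) := by
  have hmin : 0 < min 1 μ := lt_min one_pos hμ
  have hsum : Summable (fun n : ℕ => (min 1 μ)⁻¹ * ((x^2/4)^n / n.factorial)) :=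
    (Real.summable_pow_div_factorial (x^2/4)).mul_left _
  have h1 : ∀ n : ℕ, 0 ≤ coef μ n * x^(2*n) := by
    intro n
    have h1 := coef_pos hμ n
    have hx : (0:ℝ) ≤ x^(2*n) := by rw [pow_mul]; positivity
    exact mul_nonneg h1.le hx
  have h2 : ∀ n : ℕ, coef μ n * x^(2*n) ≤ (min 1 μ)⁻¹ * ((x^2/4)^n / n.factorial) := by
    intro n
    have hP := P_pos hμ n
    have hPm := min_le_P hμ n
    rw [coef_mul_eq, mul_comm ((min 1 μ)⁻¹) _]
    have hnn : (0:ℝ) ≤ (x^2/4)^n / n.factorial := by positivity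
    exact mul_le_mul_of_nonneg_left (inv_anti₀ hmin hPm) hnn
  exact Summable.of_nonneg_of_le h1 h2 hsum

set_option maxHeartbeats 1000000 in
lemma key_ineq {ν : ℝ} (hν : -1 < ν) (m : ℕ) :
    (ν+1) * coef (ν+1) (m+2) < coef (ν+1) (m+1) * coef (ν+2) 1 + (ν+2) * coef (ν+2) (m+2) := by
  set μ : ℝ := ν + 1 with hμdef
  have hμ : 0 < μ := by simp [hμdef]; linarith
  set u := P μ (m+1) with hu_def
  set v := P (μ+1) (m+1) with hv_def
  set w := P (μ+2) (m+1) with hw_def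
  have hu : 0 < u := P_pos hμ _
  have hv : 0 < v := P_pos (by linarith) _
  have hw : 0 < w := P_pos (by linarith) _
  have huv : u ≤ v := P_le hμ _
  have hvw : v ≤ w := by
    have := P_le (μ := μ+1) (by linarith) (m+1)
    simpa [show μ + 1 + 1 = μ + 2 by ring] using this
  set X : ℝ := (m:ℝ) + 1 with hX_def
  have hX : 1 ≤ X := by
    have : (0:ℝ) ≤ m := Nat.cast_nonneg m
    rw [hX_def]; linarith
  have hrel : (μ+1)*w = v*(μ+1+X) := by
    have h1 : P (μ+1) (m+2) = (μ+1) * w := by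
      rw [hw_def, show μ+(2:ℝ) = μ+1+1 by ring]
      exact P_succ' (μ+1) (m+1)
    have h2 : P (μ+1) (m+2) = v * (μ+1+X) := by
      rw [P_succ (μ+1) (m+1), hX_def]
      push_cast
      ring
    linarith [h1.symm.trans h2]
  set t : ℝ := (1/4)^(m+2) / ((m+2).factorial : ℝ) with ht_def
  have ht : 0 < t := by
    have : (0:ℝ) < ((m+2).factorial : ℝ) := by positivity
    rw [ht_def]; positivity
  have hfact : ((m+2).factorial : ℝ) = (X+1) * ((m+1).factorial : ℝ) := by
    rw [Nat.factorial_succ, hX_def]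
    push_cast
    ring
  have hf1 : (0:ℝ) < ((m+1).factorial : ℝ) := by positivity
  have e1 : (ν+1) * coef (ν+1) (m+2) = t / v := by
    rw [coef, show P (ν+1) (m+2) = P μ (m+2) by rw [hμdef], P_succ', ← hv_def, ht_def, ← hμdef]
    field_simp
  have e2 : (ν+2) * coef (ν+2) (m+2) = t / w := by
    rw [coef, show (ν+2 : ℝ) = μ + 1 by rw [hμdef]; ring, P_succ',
      show (μ+1+1 : ℝ) = μ + 2 by ring, ← hw_def, ht_def]
    have hμ1 : (0:ℝ) < μ + 1 := by linarith
    field_simp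
  have e3 : coef (ν+1) (m+1) * coef (ν+2) 1 = t * (X+1) / ((μ+1) * u) := by
    rw [coef, show (ν+2 : ℝ) = μ + 1 by rw [hμdef]; ring, coef_one, ← hμdef, ← hu_def,
      ht_def, hfact]
    have hμ1 : (0:ℝ) < μ + 1 := by linarith
    have hX1 : (0:ℝ) < X + 1 := by linarith
    field_simp
    ring
  rw [e1, e2, e3]
  -- core inequality
  have h1 : t / v = t * (μ+1+X) / ((μ+1)*w) := by
    rw [div_eq_div_iff (ne_of_gt hv) (by positivity)]
    nlinarith [hrel]
  rw [h1]
  have h2 : t * (μ+1+X) / ((μ+1)*w) - t / w = t * X / ((μ+1)*w) := by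
    field_simp
    ring
  have h3 : t * X / ((μ+1)*w) < t * (X+1) / ((μ+1)*u) := by
    rw [div_lt_div_iff₀ (by positivity) (by positivity)]
    have hXw : X * u ≤ X * w := by nlinarith
    nlinarith [mul_pos hu (mul_pos ht (by linarith : (0:ℝ) < μ+1))]
  linarith

/-- coefficients of the series `A·B + (ν+1)·B - (ν+2)·A`. -/
noncomputable def dcoef (ν : ℝ) (n : ℕ) : ℝ :=
  (∑ kl ∈ Finset.HasAntidiagonal.antidiagonal n, coef (ν+1) kl.1 * coef (ν+2) kl.2)
    + (ν+1) * coef (ν+2) n - (ν+2) * coef (ν+1) n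

lemma dcoef_zero (ν : ℝ) : dcoef ν 0 = 0 := by
  simp [dcoef, coef_zero]
  ring

lemma dcoef_one {ν : ℝ} (hν : -1 < ν) : dcoef ν 1 = 0 := by
  have h1 : (ν:ℝ) + 1 ≠ 0 := by linarith
  have h2 : (ν:ℝ) + 2 ≠ 0 := by linarith
  have hset : Finset.HasAntidiagonal.antidiagonal 1 = ({(0,1),(1,0)} : Finset (ℕ × ℕ)) := by decide
  rw [dcoef, hset, Finset.sum_insert (by simp), Finset.sum_singleton]
  simp only [coef_zero, coef_one]
  field_simp
  ring

lemma dcoef_pos {ν : ℝ} (hν : -1 < ν) (m : ℕ) : 0 < dcoef ν (m+2) := by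
  have hμ1 : (0:ℝ) < ν + 1 := by linarith
  have hμ2 : (0:ℝ) < ν + 2 := by linarith
  have hanti : ({(0, m+2), (m+1, 1), (m+2, 0)} : Finset (ℕ × ℕ)) ⊆
      Finset.HasAntidiagonal.antidiagonal (m+2) := by
    intro kl hkl
    simp only [Finset.mem_insert, Finset.mem_singleton] at hkl
    rcases hkl with h | h | h <;> subst h <;> simp [Finset.HasAntidiagonal.mem_antidiagonal]
  have hsum : ∑ kl ∈ ({(0, m+2), (m+1, 1), (m+2, 0)} : Finset (ℕ × ℕ)),
      coef (ν+1) kl.1 * coef (ν+2) kl.2 ≤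
      ∑ kl ∈ Finset.HasAntidiagonal.antidiagonal (m+2), coef (ν+1) kl.1 * coef (ν+2) kl.2 := by
    apply Finset.sum_le_sum_of_subset_of_nonneg hanti
    intro kl _ _
    exact mul_nonneg (coef_pos hμ1 _).le (coef_pos hμ2 _).le
  have hset : ∑ kl ∈ ({(0, m+2), (m+1, 1), (m+2, 0)} : Finset (ℕ × ℕ)),
      coef (ν+1) kl.1 * coef (ν+2) kl.2 =
      coef (ν+2) (m+2) + coef (ν+1) (m+1) * coef (ν+2) 1 + coef (ν+1) (m+2) := by
    rw [Finset.sum_insert (by simp), Finset.sum_insert (by simp), Finset.sum_singleton]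
    simp [coef_zero]
    ring
  have hkey := key_ineq hν m
  rw [hset] at hsum
  rw [dcoef]
  linarith

lemma coef_nonneg_term {μ : ℝ} (hμ : 0 < μ) (n : ℕ) (x : ℝ) :
    0 ≤ coef μ n * x^(2*n) := by
  have h1 := coef_pos hμ n
  have hx : (0:ℝ) ≤ x^(2*n) := by rw [pow_mul]; positivity
  exact mul_nonneg h1.le hx

lemma besselIn_ge_one {ν : ℝ} (hν : -1 < ν) (x : ℝ) : 1 ≤ besselIn ν x := by
  rw [besselIn_eq hν]
  have hμ : (0:ℝ) < ν + 1 := by linarith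
  have h := Summable.le_tsum (summable_coef hμ x) 0 (fun j _ => coef_nonneg_term hμ j x)
  simpa [coef_zero] using h

lemma besselIn_pos {ν : ℝ} (hν : -1 < ν) (x : ℝ) : 0 < besselIn ν x :=
  lt_of_lt_of_le one_pos (besselIn_ge_one hν x)

lemma besselIn_lower {ν : ℝ} (hν : -1 < ν) (x : ℝ) :
    1 + x^2/(4*(ν+1)) ≤ besselIn ν x := by
  rw [besselIn_eq hν]
  have hμ : (0:ℝ) < ν + 1 := by linarith
  have h := Summable.sum_le_tsum (Finset.range 2) (fun j _ => coef_nonneg_term hμ j x)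
    (summable_coef hμ x)
  rw [Finset.sum_range_succ, Finset.sum_range_one] at h
  simp only [coef_zero, coef_one, Nat.mul_zero, pow_zero, Nat.mul_one] at h
  calc 1 + x^2/(4*(ν+1)) = 1 * 1 + 1/(4*(ν+1)) * x^(2*1) := by rw [pow_mul]; ring
  _ ≤ _ := by simpa using h

lemma besselIn_succ_lt {ν : ℝ} (hν : -1 < ν) {x : ℝ} (hx : 0 < x) :
    besselIn (ν+1) x < besselIn ν x := by
  have hμ1 : (0:ℝ) < ν + 1 := by linarith
  have hμ2 : (0:ℝ) < ν + 2 := by linarith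
  rw [besselIn_eq hν, besselIn_eq (show (-1:ℝ) < ν + 1 by linarith),
    show (ν:ℝ)+1+1 = ν+2 by ring]
  apply Summable.tsum_lt_tsum_of_nonneg (i := 1)
  · exact fun n => coef_nonneg_term hμ2 n x
  · intro n
    have h := coef_anti hμ1 n
    rw [show (ν:ℝ)+1+1 = ν+2 by ring] at h
    have hx2 : (0:ℝ) ≤ x^(2*n) := by rw [pow_mul]; positivity
    exact mul_le_mul_of_nonneg_right h hx2
  · rw [coef_one, coef_one]
    have hx2 : (0:ℝ) < x^(2*1) := by rw [pow_mul]; positivity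
    apply mul_lt_mul_of_pos_right _ hx2
    apply div_lt_div_of_pos_left one_pos (by linarith) (by linarith)
  · exact summable_coef hμ1 x

lemma summable_norm_coef {μ : ℝ} (hμ : 0 < μ) (x : ℝ) :
    Summable (fun n => ‖coef μ n * x^(2*n)‖) := by
  have : (fun n => ‖coef μ n * x^(2*n)‖) = fun n => coef μ n * x^(2*n) := by
    funext n
    rw [Real.norm_eq_abs, abs_of_nonneg (coef_nonneg_term hμ n x)]
  rw [this]
  exact summable_coef hμ x

lemma inner_sum_eq (ν x : ℝ) (n : ℕ) :
    (∑ kl ∈ Finset.HasAntidiagonal.antidiagonal n,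
      (coef (ν+1) kl.1 * x^(2*kl.1)) * (coef (ν+2) kl.2 * x^(2*kl.2))) =
    (∑ kl ∈ Finset.HasAntidiagonal.antidiagonal n, coef (ν+1) kl.1 * coef (ν+2) kl.2) * x^(2*n) := by
  rw [Finset.sum_mul]
  apply Finset.sum_congr rfl
  intro kl hkl
  have hkl' : kl.1 + kl.2 = n := Finset.HasAntidiagonal.mem_antidiagonal.mp hkl
  rw [← hkl', show 2*(kl.1 + kl.2) = 2*kl.1 + 2*kl.2 by ring, pow_add]
  ring

lemma summable_antidiag {ν : ℝ} (hν : -1 < ν) (x : ℝ) :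
    Summable (fun n => (∑ kl ∈ Finset.HasAntidiagonal.antidiagonal n,
      coef (ν+1) kl.1 * coef (ν+2) kl.2) * x^(2*n)) := by
  have hμ1 : (0:ℝ) < ν + 1 := by linarith
  have hμ2 : (0:ℝ) < ν + 2 := by linarith
  have h := (summable_norm_sum_mul_antidiagonal_of_summable_norm
    (f := fun n => coef (ν+1) n * x^(2*n)) (g := fun n => coef (ν+2) n * x^(2*n))
    (summable_norm_coef hμ1 x) (summable_norm_coef hμ2 x)).of_norm
  have he : (fun n => ∑ kl ∈ Finset.HasAntidiagonal.antidiagonal n,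
      (coef (ν+1) kl.1 * x^(2*kl.1)) * (coef (ν+2) kl.2 * x^(2*kl.2))) =
      (fun n => (∑ kl ∈ Finset.HasAntidiagonal.antidiagonal n,
        coef (ν+1) kl.1 * coef (ν+2) kl.2) * x^(2*n)) := funext (inner_sum_eq ν x)
  rwa [he] at h

lemma prod_repr {ν : ℝ} (hν : -1 < ν) (x : ℝ) :
    besselIn ν x * besselIn (ν+1) x + (ν+1) * besselIn (ν+1) x - (ν+2) * besselIn ν x
      = ∑' n, dcoef ν n * x^(2*n) := by
  have hν1 : (-1:ℝ) < ν + 1 := by linarith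
  have hμ1 : (0:ℝ) < ν + 1 := by linarith
  have hμ2 : (0:ℝ) < ν + 2 := by linarith
  rw [besselIn_eq hν, besselIn_eq hν1, show (ν:ℝ)+1+1 = ν+2 by ring]
  rw [tsum_mul_tsum_eq_tsum_sum_antidiagonal_of_summable_norm
    (summable_norm_coef hμ1 x) (summable_norm_coef hμ2 x)]
  have he : (fun n => ∑ kl ∈ Finset.HasAntidiagonal.antidiagonal n,
      (coef (ν+1) kl.1 * x^(2*kl.1)) * (coef (ν+2) kl.2 * x^(2*kl.2))) =
      (fun n => (∑ kl ∈ Finset.HasAntidiagonal.antidiagonal n,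
        coef (ν+1) kl.1 * coef (ν+2) kl.2) * x^(2*n)) := funext (inner_sum_eq ν x)
  rw [he]
  rw [← tsum_mul_left (a := ν+1), ← tsum_mul_left (a := ν+2)]
  rw [← Summable.tsum_add (summable_antidiag hν x) ((summable_coef hμ2 x).mul_left (ν+1))]
  rw [← Summable.tsum_sub (((summable_antidiag hν x).add ((summable_coef hμ2 x).mul_left (ν+1))))
    ((summable_coef hμ1 x).mul_left (ν+2))]
  apply tsum_congr
  intro n
  rw [dcoef]
  ring

lemma summable_dterm {ν : ℝ} (hν : -1 < ν) (x : ℝ) :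
    Summable (fun n => dcoef ν n * x^(2*n)) := by
  have hμ1 : (0:ℝ) < ν + 1 := by linarith
  have hμ2 : (0:ℝ) < ν + 2 := by linarith
  have h := ((summable_antidiag hν x).add ((summable_coef hμ2 x).mul_left (ν+1))).sub
    ((summable_coef hμ1 x).mul_left (ν+2))
  have he : (fun n => ((∑ kl ∈ Finset.HasAntidiagonal.antidiagonal n,
        coef (ν+1) kl.1 * coef (ν+2) kl.2) * x^(2*n)
      + (ν+1) * (coef (ν+2) n * x^(2*n))) - (ν+2) * (coef (ν+1) n * x^(2*n))) =
      (fun n => dcoef ν n * x^(2*n)) := by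
    funext n
    rw [dcoef]
    ring
  rwa [he] at h

lemma dcoef_nonneg {ν : ℝ} (hν : -1 < ν) (n : ℕ) : 0 ≤ dcoef ν n := by
  match n with
  | 0 => rw [dcoef_zero]
  | 1 => rw [dcoef_one hν]
  | (m+2) => exact (dcoef_pos hν m).le

lemma dterm_nonneg {ν : ℝ} (hν : -1 < ν) (n : ℕ) (x : ℝ) : 0 ≤ dcoef ν n * x^(2*n) := by
  have hx : (0:ℝ) ≤ x^(2*n) := by rw [pow_mul]; positivity
  exact mul_nonneg (dcoef_nonneg hν n) hx

lemma D_pos {ν : ℝ} (hν : -1 < ν) {x : ℝ} (hx : 0 < x) :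
    0 < ∑' n, dcoef ν n * x^(2*n) := by
  have h := Summable.le_tsum (summable_dterm hν x) 2 (fun j _ => dterm_nonneg hν j x)
  have h2 : 0 < dcoef ν 2 * x^(2*2) := by
    apply mul_pos (dcoef_pos hν 0)
    positivity
  linarith

lemma summable_dcoef {ν : ℝ} (hν : -1 < ν) : Summable (dcoef ν) := by
  have h := summable_dterm hν 1
  simpa using h

lemma K_pos {ν : ℝ} (hν : -1 < ν) : 0 < ∑' n, dcoef ν n := by
  have h := Summable.le_tsum (summable_dcoef hν) 2 (fun j _ => dcoef_nonneg hν j)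
  linarith [dcoef_pos hν 0]

lemma D_le {ν : ℝ} (hν : -1 < ν) {x : ℝ} (hx : 0 < x) (hx1 : x ≤ 1) :
    ∑' n, dcoef ν n * x^(2*n) ≤ (∑' n, dcoef ν n) * x^4 := by
  have hle : ∀ n, dcoef ν n * x^(2*n) ≤ dcoef ν n * x^4 := by
    intro n
    match n with
    | 0 => rw [dcoef_zero]; simp
    | 1 => rw [dcoef_one hν]; simp
    | (m+2) =>
      apply mul_le_mul_of_nonneg_left _ (dcoef_nonneg hν _)
      exact pow_le_pow_of_le_one hx.le hx1 (by omega)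
  calc ∑' n, dcoef ν n * x^(2*n) ≤ ∑' n, dcoef ν n * x^4 :=
        Summable.tsum_le_tsum hle (summable_dterm hν x) ((summable_dcoef hν).mul_right _)
  _ = (∑' n, dcoef ν n) * x^4 := tsum_mul_right

end BesselAux

namespace BesselAux

set_option maxHeartbeats 1000000 in
lemma forward_p {ν p : ℝ} (hν : -1 < ν)
    (H : ∀ x : ℝ, 0 < x →
      (1 - p) * besselIn (ν + 1) x + p * besselIn (ν + 1) x / besselIn ν x > 1) :
    p ≤ (ν + 1) / (ν + 2) := by
  have hμ1 : (0:ℝ) < ν + 1 := by linarith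
  have hμ2 : (0:ℝ) < ν + 2 := by linarith
  have hν1 : (-1:ℝ) < ν + 1 := by linarith
  by_contra hp
  push_neg at hp
  have hε : 0 < p*(ν+2) - (ν+1) := by
    have := (div_lt_iff₀ hμ2).mp hp
    linarith
  set ε := p*(ν+2) - (ν+1) with hεdef
  set K := ∑' n, BesselAux.dcoef ν n with hKdef
  have hK : 0 < K := BesselAux.K_pos hν
  set C := ε/(4*(ν+1)) with hCdef
  have hC : 0 < C := div_pos hε (by linarith)
  have hCK : 0 < C/(2*K) := div_pos hC (by linarith)
  set x := min 1 (Real.sqrt (C/(2*K))) with hxdef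
  have hx : 0 < x := lt_min one_pos (Real.sqrt_pos.mpr hCK)
  have hx1 : x ≤ 1 := min_le_left _ _
  have hxsq : x^2 ≤ C/(2*K) := by
    have h1 : x ≤ Real.sqrt (C/(2*K)) := min_le_right _ _
    have h2 : Real.sqrt (C/(2*K))^2 = C/(2*K) := Real.sq_sqrt hCK.le
    nlinarith [Real.sqrt_nonneg (C/(2*K)), hx.le]
  have h1 := H x hx
  rw [mul_div_assoc] at h1
  set A := besselIn ν x with hA
  set B := besselIn (ν+1) x with hB
  have hA0 : 0 < A := BesselAux.besselIn_pos hν x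
  have hA1 : 1 ≤ A := BesselAux.besselIn_ge_one hν x
  have hAl : 1 + x^2/(4*(ν+1)) ≤ A := BesselAux.besselIn_lower hν x
  have hB1 : 1 ≤ B := BesselAux.besselIn_ge_one hν1 x
  have hD : A*B + (ν+1)*B - (ν+2)*A = ∑' n, BesselAux.dcoef ν n * x^(2*n) :=
    BesselAux.prod_repr hν x
  have hDle : ∑' n, BesselAux.dcoef ν n * x^(2*n) ≤ K * x^4 :=
    BesselAux.D_le hν hx hx1
  have hs : B/A*A = B := div_mul_cancel₀ B (ne_of_gt hA0)
  have h1' : 0 < (1-p)*B + p*(B/A) - 1 := by linarith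
  have h2 : 0 < (ν+2)*(1-p)*A*B + (ν+2)*p*B - (ν+2)*A := by
    have hm := mul_pos (mul_pos hμ2 hA0) h1'
    have hexp : (ν+2)*A*((1-p)*B + p*(B/A) - 1)
        = (ν+2)*(1-p)*A*B + (ν+2)*p*(B/A*A) - (ν+2)*A := by ring
    rw [hs] at hexp
    linarith [hm, hexp.le, hexp.ge]
  have h3 : ε*(A-1)*B < A*B + (ν+1)*B - (ν+2)*A := by
    have hid : A*B + (ν+1)*B - (ν+2)*A - ε*(A-1)*B
        = (ν+2)*(1-p)*A*B + (ν+2)*p*B - (ν+2)*A := by rw [hεdef]; ring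
    linarith
  have ha : x^2/(4*(ν+1)) ≤ A - 1 := by linarith
  have h4 : ε*(x^2/(4*(ν+1))) ≤ ε*(A-1)*B := by
    have s1 : ε*(x^2/(4*(ν+1))) ≤ ε*(A-1) := mul_le_mul_of_nonneg_left ha hε.le
    have s2 : ε*(A-1) ≤ ε*(A-1)*B := by
      have hAm : (0:ℝ) ≤ A - 1 := by linarith
      have hBm : (0:ℝ) ≤ B - 1 := by linarith
      nlinarith [mul_nonneg (mul_nonneg hε.le hAm) hBm]
    exact s1.trans s2
  have h5 : C*x^2 < K*x^4 := by
    have hCx : C*x^2 = ε*(x^2/(4*(ν+1))) := by rw [hCdef]; ring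
    linarith
  have h6 : K*x^4 ≤ C/2*x^2 := by
    have hKx : x^2*(2*K) ≤ C := (le_div_iff₀ (by positivity)).mp hxsq
    have hx2 : (0:ℝ) ≤ x^2 := sq_nonneg x
    nlinarith
  have hx2 : (0:ℝ) < x^2 := by positivity
  nlinarith [h5, h6, hC, hx2]

set_option maxHeartbeats 1000000 in
lemma forward_q {ν q : ℝ} (hν : -1 < ν)
    (H : ∀ x : ℝ, 0 < x →
      1 > (1 - q) * besselIn (ν + 1) x + q * besselIn (ν + 1) x / besselIn ν x) :
    1 ≤ q := by
  have hμ1 : (0:ℝ) < ν + 1 := by linarith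
  have hμ2 : (0:ℝ) < ν + 2 := by linarith
  have hν1 : (-1:ℝ) < ν + 1 := by linarith
  by_contra hq
  push_neg at hq
  have hmaxpos : (0:ℝ) < (max q 0 + 1)*(4*(ν+2)) := by
    have : (0:ℝ) ≤ max q 0 := le_max_right q 0
    nlinarith
  set c := (max q 0 + 1)*(4*(ν+2))/(1-q) with hcdef
  have hc : 0 < c := div_pos hmaxpos (by linarith)
  set x := Real.sqrt c with hxdef
  have hx : 0 < x := Real.sqrt_pos.mpr hc
  have hxsq : x^2 = c := Real.sq_sqrt hc.le
  have h2 := H x hx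
  rw [mul_div_assoc] at h2
  set A := besselIn ν x with hA
  set B := besselIn (ν+1) x with hB
  have hA0 : 0 < A := BesselAux.besselIn_pos hν x
  have hA1 : 1 ≤ A := BesselAux.besselIn_ge_one hν x
  have hBA : B < A := BesselAux.besselIn_succ_lt hν hx
  have hB1 : 1 ≤ B := BesselAux.besselIn_ge_one hν1 x
  have hBl : 1 + x^2/(4*(ν+2)) ≤ B := by
    have h := BesselAux.besselIn_lower hν1 x
    rw [show ((ν:ℝ)+1+1) = ν+2 by ring] at h
    exact h
  have hs1 : B/A ≤ 1 := (div_le_one hA0).mpr hBA.le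
  have hs0 : 0 ≤ B/A := by positivity
  have hmin : min q 0 ≤ q*(B/A) := by
    rcases le_total q 0 with h|h
    · rw [min_eq_left h]
      nlinarith
    · rw [min_eq_right h]
      exact mul_nonneg h hs0
  have hkey : (1-q)*(1 + x^2/(4*(ν+2))) ≤ (1-q)*B :=
    mul_le_mul_of_nonneg_left hBl (by linarith)
  have hexp : (1-q)*(1 + x^2/(4*(ν+2))) = (1-q) + (max q 0 + 1) := by
    rw [hxsq, hcdef]
    have h1q : (1:ℝ)-q ≠ 0 := by linarith
    have h42 : (4:ℝ)*(ν+2) ≠ 0 := by positivity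
    field_simp
  have hmm : max q 0 + min q 0 = q + 0 := max_add_min q 0
  linarith

set_option maxHeartbeats 1000000 in
lemma reverse_both {ν p q : ℝ} (hν : -1 < ν) (hp : p ≤ (ν + 1) / (ν + 2)) (hq : 1 ≤ q)
    {x : ℝ} (hx : 0 < x) :
    (1 - p) * besselIn (ν + 1) x + p * besselIn (ν + 1) x / besselIn ν x > 1 ∧
      1 > (1 - q) * besselIn (ν + 1) x + q * besselIn (ν + 1) x / besselIn ν x := by
  have hμ1 : (0:ℝ) < ν + 1 := by linarith
  have hμ2 : (0:ℝ) < ν + 2 := by linarith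
  have hν1 : (-1:ℝ) < ν + 1 := by linarith
  set A := besselIn ν x with hA
  set B := besselIn (ν+1) x with hB
  have hA0 : 0 < A := BesselAux.besselIn_pos hν x
  have hA1 : 1 ≤ A := BesselAux.besselIn_ge_one hν x
  have hBA : B < A := BesselAux.besselIn_succ_lt hν hx
  have hB1 : 1 ≤ B := BesselAux.besselIn_ge_one hν1 x
  have hs : B/A*A = B := div_mul_cancel₀ B (ne_of_gt hA0)
  have hsB : B/A ≤ B := div_le_self (by linarith) hA1
  constructor
  · rw [mul_div_assoc]
    have hDpos : 0 < A*B + (ν+1)*B - (ν+2)*A := by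
      rw [BesselAux.prod_repr hν x]
      exact BesselAux.D_pos hν hx
    have hfac : A*(B + (ν+1)*(B/A) - (ν+2)) = A*B + (ν+1)*B - (ν+2)*A := by
      have hexp : A*(B + (ν+1)*(B/A) - (ν+2))
          = A*B + (ν+1)*(B/A*A) - (ν+2)*A := by ring
      rw [hexp, hs]
    have hkey : 0 < B + (ν+1)*(B/A) - (ν+2) := by
      nlinarith [hDpos, hfac, hA0]
    have hp' : p*(ν+2) ≤ ν+1 := by
      have := (le_div_iff₀ hμ2).mp hp
      linarith
    have hprod : 0 ≤ ((ν+1) - p*(ν+2))*(B - B/A) :=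
      mul_nonneg (by linarith) (by linarith)
    nlinarith [hkey, hprod, hμ2]
  · rw [mul_div_assoc]
    have h1 : B/A < 1 := (div_lt_one hA0).mpr hBA
    have hprod : 0 ≤ (q - 1)*(B - B/A) := mul_nonneg (by linarith) (by linarith)
    nlinarith [h1, hprod]

end BesselAux

theorem besselI_huygens_iff (ν p q : ℝ) (hν : -1 < ν) :
    (∀ x : ℝ, 0 < x →
      (1 - p) * besselIn (ν + 1) x + p * besselIn (ν + 1) x / besselIn ν x > 1 ∧
      1 > (1 - q) * besselIn (ν + 1) x + q * besselIn (ν + 1) x / besselIn ν x) ↔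
    (p ≤ (ν + 1) / (ν + 2) ∧ q ≥ 1) := by
  constructor
  · intro H
    exact ⟨BesselAux.forward_p hν (fun x hx => (H x hx).1),
      BesselAux.forward_q hν (fun x hx => (H x hx).2)⟩
  · rintro ⟨hp, hq⟩ x hx
    exact BesselAux.reverse_both hν hp hq hx
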